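/- Let S be a symmetric positive definite real n̄×n̄ matrix, τ > 0, Γ ∈ ℝ^{n_ζ×n̄}, and let B ∈ ℝ^{m×n_ζ} with rows b₁ᵀ, …, b_mᵀ. Then for every ζ ∈ U = { Γz : zᵀSz ≤ τ }, the Euclidean norm satisfies ‖Bζ‖₂ ≤ √( Σ_{m̄=1}^{m} τ · ‖Γᵀb_{m̄}‖²_{S⁻¹} ). -/

import Mathlib

open Matrix

open scoped MatrixOrder in
lemma cs_aux {n : ℕ} {S : Matrix (Fin n) (Fin n) ℝ} (hS : S.PosSemidef)
    (x y : Fin n → ℝ) :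
    (x ⬝ᵥ S.mulVec y) ^ 2 ≤ (x ⬝ᵥ S.mulVec x) * (y ⬝ᵥ S.mulVec y) := by
  set R := CFC.sqrt S with hR
  have hRR : R * R = S := CFC.sqrt_mul_sqrt_self S hS.nonneg
  have hRsym : Rᵀ = R := by
    have := (CFC.sqrt_nonneg S).posSemidef.isHermitian
    simpa [Matrix.IsHermitian] using this
  have key : ∀ u w : Fin n → ℝ, u ⬝ᵥ S.mulVec w = (R.mulVec u) ⬝ᵥ (R.mulVec w) := by
    intro u w
    rw [← hRR, ← Matrix.mulVec_mulVec, Matrix.dotProduct_mulVec u R,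
      ← Matrix.mulVec_transpose, hRsym]
  rw [key x y, key x x, key y y]
  have h := Finset.sum_mul_sq_le_sq_mul_sq Finset.univ (R.mulVec x) (R.mulVec y)
  simpa [dotProduct, pow_two] using h

/-- For every `ζ ∈ U = { Γz : zᵀSz ≤ τ }`, the Euclidean norm of `Bζ` is bounded
by `√( Σ_{m̄} τ·‖Γᵀb_{m̄}‖²_{S⁻¹} )`, where `b_{m̄}ᵀ` are the rows of `B`. -/
theorem stmt_6 {nζ nbar m : ℕ}
    (S : Matrix (Fin nbar) (Fin nbar) ℝ) (hS : S.PosDef)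
    (τ : ℝ) (hτ : 0 < τ)
    (Γ : Matrix (Fin nζ) (Fin nbar) ℝ) (B : Matrix (Fin m) (Fin nζ) ℝ) :
    ∀ z : Fin nbar → ℝ, z ⬝ᵥ S.mulVec z ≤ τ →
      Real.sqrt (∑ i, (B.mulVec (Γ.mulVec z) i) ^ 2) ≤
        Real.sqrt (∑ mb, τ *
          (Real.sqrt ((Γᵀ.mulVec (B mb)) ⬝ᵥ S⁻¹.mulVec (Γᵀ.mulVec (B mb)))) ^ 2) := by
  intro z hz
  have hdet : IsUnit S.det := isUnit_iff_ne_zero.mpr hS.det_pos.ne'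
  have hSinv : S⁻¹.PosDef := hS.inv
  have hSsym : Sᵀ = S := by simpa [Matrix.IsHermitian] using hS.isHermitian
  apply Real.sqrt_le_sqrt
  apply Finset.sum_le_sum
  intro i _
  set v : Fin nbar → ℝ := Γᵀ.mulVec (B i) with hv
  have hvq : 0 ≤ v ⬝ᵥ S⁻¹.mulVec v := hSinv.posSemidef.re_dotProduct_nonneg v
  rw [Real.sq_sqrt hvq]
  -- B.mulVec (Γ.mulVec z) i = v ⬝ᵥ z
  have h1 : B.mulVec (Γ.mulVec z) i = v ⬝ᵥ z := by
    rw [hv, Matrix.mulVec_transpose, ← Matrix.dotProduct_mulVec]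
    rfl
  -- v ⬝ᵥ z = x ⬝ᵥ S.mulVec z with x = S⁻¹.mulVec v
  set x : Fin nbar → ℝ := S⁻¹.mulVec v with hx
  have hSx : S.mulVec x = v := by
    rw [hx, Matrix.mulVec_mulVec, Matrix.mul_nonsing_inv S hdet, Matrix.one_mulVec]
  have h2 : v ⬝ᵥ z = x ⬝ᵥ S.mulVec z := by
    rw [← hSx, dotProduct_comm, Matrix.dotProduct_mulVec,
      ← Matrix.mulVec_transpose, hSsym, dotProduct_comm]
  have hxx : x ⬝ᵥ S.mulVec x = v ⬝ᵥ S⁻¹.mulVec v := by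
    rw [hSx, dotProduct_comm, hx]
  have hcs := cs_aux hS.posSemidef x z
  rw [hxx] at hcs
  calc (B.mulVec (Γ.mulVec z) i) ^ 2 = (x ⬝ᵥ S.mulVec z) ^ 2 := by rw [h1, h2]
    _ ≤ (v ⬝ᵥ S⁻¹.mulVec v) * (z ⬝ᵥ S.mulVec z) := hcs
    _ ≤ (v ⬝ᵥ S⁻¹.mulVec v) * τ := by
        exact mul_le_mul_of_nonneg_left hz hvq
    _ = τ * (v ⬝ᵥ S⁻¹.mulVec v) := mul_comm _ _
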